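/- arXiv:2004.10837 — 2 statements merged into one kernel-verified Lean document; each statement's English description precedes it below -/
import Mathlib

section
/- For a tuple A = (A₁,…,A_a) of nonnegative integers and an integer t with 0 ≤ t ≤ |A| (where |A| = A₁+⋯+A_a), the quantum multinomial coefficient splits as: [|A| choose A₁,…,A_a] = Σ over tuples (At₁,…,At_a) with 0 ≤ At_i ≤ A_i and At₁+⋯+At_a = t of q^{e(At)} · [t choose At₁,…,At_a] · [|A|-t choose A₁-At₁,…,A_a-At_a], where the exponent e(At) = 2·Σ_{i<j} At_j·(A_i - At_i) is a quadratic form in the summation indices. -/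
open Finset

noncomputable def q : RatFunc ℚ := RatFunc.X

/-- `(q²;q²)_k = ∏_{i=1}^{k} (1 - q^{2i})`. -/
noncomputable def qp (k : ℕ) : RatFunc ℚ := ∏ i ∈ Finset.range k, (1 - q ^ (2 * (i + 1)))

/-- The quantum multinomial coefficient `[|d| choose d₁,…,d_m]`. -/
noncomputable def qmul {m : ℕ} (d : Fin m → ℕ) : RatFunc ℚ :=
  qp (∑ i, d i) / ∏ i, qp (d i)

section QMSaux
open Polynomial
lemma q_ne_zero : q ≠ 0 := by
  simpa [q] using RatFunc.X_ne_zero (K := ℚ)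

lemma one_sub_q_pow_ne_zero (m : ℕ) (hm : 0 < m) : (1 : RatFunc ℚ) - q ^ m ≠ 0 := by
  intro h
  have h1 : (q : RatFunc ℚ) ^ m = 1 := by linear_combination -h
  have : (RatFunc.X : RatFunc ℚ) ^ m = 1 := by simpa [q] using h1
  have h2 : (algebraMap (Polynomial ℚ) (RatFunc ℚ)) (Polynomial.X ^ m) =
      (algebraMap (Polynomial ℚ) (RatFunc ℚ)) 1 := by
    simpa [map_pow, RatFunc.algebraMap_X] using this
  have h3 := RatFunc.algebraMap_injective ℚ h2
  have := congrArg Polynomial.natDegree h3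
  simp [Polynomial.natDegree_X_pow, hm.ne'] at this

lemma qp_ne_zero (k : ℕ) : qp k ≠ 0 := by
  unfold qp
  refine Finset.prod_ne_zero_iff.2 fun i _ => ?_
  exact one_sub_q_pow_ne_zero _ (by positivity)

lemma qp_succ (k : ℕ) : qp (k + 1) = qp k * (1 - q ^ (2 * (k + 1))) := by
  simp [qp, Finset.prod_range_succ]

noncomputable def qbin (n k : ℕ) : RatFunc ℚ := qp n / (qp k * qp (n - k))

lemma qp_zero : qp 0 = 1 := by simp [qp]

lemma qbin_zero (n : ℕ) : qbin n 0 = 1 := by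
  simp [qbin, qp_zero, div_self (qp_ne_zero n)]

lemma qbin_self (n : ℕ) : qbin n n = 1 := by
  simp [qbin, qp_zero, div_self (qp_ne_zero n)]

lemma pascal (j m : ℕ) :
    qbin (j + m + 2) (j + 1) =
      qbin (j + m + 1) (j + 1) + q ^ (2 * (m + 1)) * qbin (j + m + 1) j := by
  have e1 : j + m + 2 - (j + 1) = m + 1 := by omega
  have e2 : j + m + 1 - (j + 1) = m := by omega
  have e3 : j + m + 1 - j = m + 1 := by omega
  rw [qbin, qbin, qbin, e1, e2, e3]
  rw [show j + m + 2 = (j + m + 1) + 1 from rfl, qp_succ (j + m + 1), qp_succ j, qp_succ m]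
  have ha := qp_ne_zero (j + m + 1)
  have hbj := qp_ne_zero j
  have hbm := qp_ne_zero m
  have huj : (1 : RatFunc ℚ) - q ^ (2 * (j + 1)) ≠ 0 := one_sub_q_pow_ne_zero _ (by positivity)
  have hum : (1 : RatFunc ℚ) - q ^ (2 * (m + 1)) ≠ 0 := one_sub_q_pow_ne_zero _ (by positivity)
  rw [← mul_div_assoc]
  rw [div_add_div _ _ (by exact mul_ne_zero (mul_ne_zero hbj huj) hbm) (by exact mul_ne_zero hbj (mul_ne_zero hbm hum))]
  rw [div_eq_div_iff (by exact mul_ne_zero (mul_ne_zero hbj huj) (mul_ne_zero hbm hum)) (by exact mul_ne_zero (mul_ne_zero (mul_ne_zero hbj huj) hbm) (mul_ne_zero hbj (mul_ne_zero hbm hum)))]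
  have key : (1 : RatFunc ℚ) - q ^ (2 * (j + m + 1 + 1)) =
      (1 - q ^ (2 * (m + 1))) + q ^ (2 * (m + 1)) * (1 - q ^ (2 * (j + 1))) := by
    have : q ^ (2 * (m + 1)) * q ^ (2 * (j + 1)) = q ^ (2 * (j + m + 1 + 1)) := by
      rw [← pow_add]; ring_nf
    linear_combination -this
  linear_combination (qp (j + m + 1) * qp j * qp m * ((1 - q ^ (2 * (j + 1))) * (1 - q ^ (2 * (m + 1)))) * qp j * qp m) * key

noncomputable def cb (s n k : ℕ) : RatFunc ℚ := q ^ (2 * s * k + k * (k - 1)) * qbin n k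

noncomputable def Pb (s n : ℕ) : Polynomial (RatFunc ℚ) :=
  ∏ j ∈ Finset.range n, (Polynomial.C (q ^ (2 * (s + j))) * Polynomial.X + 1)

lemma cb_zero (s n : ℕ) : cb s n 0 = 1 := by simp [cb, qbin_zero]

lemma cb_succ_step (s n k : ℕ) (hk : k + 1 ≤ n) :
    cb s (n + 1) (k + 1) = cb s n (k + 1) + q ^ (2 * (s + n)) * cb s n k := by
  obtain ⟨m, rfl⟩ : ∃ m, n = k + m + 1 := ⟨n - k - 1, by omega⟩
  unfold cb
  rw [show k + m + 1 + 1 = k + m + 2 from rfl, pascal k m, mul_add]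
  congr 1
  rw [← mul_assoc, ← mul_assoc, ← pow_add, ← pow_add]
  congr 2
  simp only [Nat.add_sub_cancel]
  cases k with
  | zero => ring
  | succ p => simp only [Nat.add_sub_cancel]; ring

lemma cb_top (s n : ℕ) :
    cb s (n + 1) (n + 1) = q ^ (2 * (s + n)) * cb s n n := by
  unfold cb
  rw [qbin_self, qbin_self, mul_one, mul_one, ← pow_add]
  congr 1
  simp only [Nat.add_sub_cancel]
  cases n with
  | zero => ring
  | succ p => simp only [Nat.add_sub_cancel]; ring

lemma Pb_eq (s n : ℕ) :
    Pb s n = ∑ k ∈ Finset.range (n + 1), Polynomial.C (cb s n k) * Polynomial.X ^ k := by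
  induction n with
  | zero => simp [Pb, cb_zero]
  | succ n ih =>
    rw [Pb, Finset.prod_range_succ, ← Pb, ih]
    set u := q ^ (2 * (s + n)) with hu
    rw [mul_add, mul_one, Finset.sum_mul]
    have h1 : ∀ k ∈ Finset.range (n+1),
        Polynomial.C (cb s n k) * Polynomial.X ^ k * (Polynomial.C u * Polynomial.X)
          = Polynomial.C (u * cb s n k) * Polynomial.X ^ (k+1) := by
      intro k _; rw [map_mul]; ring
    rw [Finset.sum_congr rfl h1]
    rw [Finset.sum_range_succ' (fun k => Polynomial.C (cb s (n+1) k) * Polynomial.X ^ k) (n+1)]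
    rw [Finset.sum_range_succ' (fun k => Polynomial.C (cb s n k) * Polynomial.X ^ k) n]
    rw [Finset.sum_range_succ (fun k => Polynomial.C (u * cb s n k) * Polynomial.X ^ (k+1)) n]
    rw [Finset.sum_range_succ (fun k => Polynomial.C (cb s (n+1) (k+1)) * Polynomial.X ^ (k+1)) n]
    have h2 : ∀ k ∈ Finset.range n,
        Polynomial.C (cb s (n+1) (k+1)) * Polynomial.X ^ (k+1)
          = Polynomial.C (u * cb s n k) * Polynomial.X ^ (k+1)
            + Polynomial.C (cb s n (k+1)) * Polynomial.X ^ (k+1) := by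
      intro k hk
      rw [cb_succ_step s n k (Finset.mem_range.1 hk), map_add]
      ring
    rw [Finset.sum_congr rfl h2, Finset.sum_add_distrib, cb_top, cb_zero, cb_zero]
    rw [map_mul]
    ring

lemma Pb_add (s m n : ℕ) : Pb s (m + n) = Pb s m * Pb (s + m) n := by
  rw [Pb, Pb, Pb, Finset.prod_range_add]
  congr 1
  refine Finset.prod_congr rfl fun j _ => ?_
  have : s + m + j = s + (m + j) := by omega
  rw [this]

noncomputable def Soff {a : ℕ} (A : Fin a → ℕ) (i : Fin a) : ℕ :=
  ∑ j, if j < i then A j else 0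

lemma Soff_zero {a : ℕ} (A : Fin (a + 1) → ℕ) : Soff A 0 = 0 := by
  simp [Soff, Fin.not_lt_zero]

lemma Soff_succ {a : ℕ} (A : Fin (a + 1) → ℕ) (i : Fin a) :
    Soff A i.succ = A 0 + Soff (fun j => A j.succ) i := by
  rw [Soff, Fin.sum_univ_succ]
  simp only [Fin.succ_pos, if_pos, Soff]
  congr 1
  refine Finset.sum_congr rfl fun j _ => ?_
  congr 1
  simp [Fin.succ_lt_succ_iff]

lemma Pb_blocks {a : ℕ} (A : Fin a → ℕ) (s : ℕ) :
    ∏ i, Pb (s + Soff A i) (A i) = Pb s (∑ i, A i) := by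
  induction a generalizing s with
  | zero => simp [Pb]
  | succ a ih =>
    rw [Fin.prod_univ_succ, Fin.sum_univ_succ, Pb_add]
    congr 1
    · rw [Soff_zero, Nat.add_zero]
    · rw [← ih (fun j => A j.succ) (s + A 0)]
      refine Finset.prod_congr rfl fun i _ => ?_
      rw [Soff_succ]
      congr 1
      omega

lemma tri_split {a : ℕ} (f : Fin a → Fin a → ℕ) :
    (∑ i, ∑ j, f i j) =
      ((∑ i, f i i) + (∑ i, ∑ j, if i < j then f i j else 0))
        + (∑ i, ∑ j, if i < j then f j i else 0) := by
  have e1 : ∀ i : Fin a, ∑ j, f i j =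
      (f i i + (∑ j, if i < j then f i j else 0)) + (∑ j, if j < i then f i j else 0) := by
    intro i
    have : ∀ j : Fin a, f i j =
        ((if i = j then f i j else 0) + (if i < j then f i j else 0))
          + (if j < i then f i j else 0) := by
      intro j
      rcases lt_trichotomy i j with h|h|h
      · simp [h, h.ne, lt_asymm h]
      · simp [h, lt_irrefl]
      · simp [h, h.ne', lt_asymm h]
    rw [Finset.sum_congr rfl fun j _ => this j, Finset.sum_add_distrib, Finset.sum_add_distrib,
      Finset.sum_ite_eq]
    simp
  rw [Finset.sum_congr rfl fun i _ => e1 i, Finset.sum_add_distrib, Finset.sum_add_distrib]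
  congr 1
  exact Finset.sum_comm

lemma exponent_arith {a : ℕ} (A At : Fin a → ℕ) (t : ℕ)
    (hle : ∀ i, At i ≤ A i) (hs : ∑ i, At i = t) :
    ∑ i, (2 * Soff A i * At i + At i * (At i - 1)) =
      t * (t - 1) + 2 * ∑ i, ∑ j, if i < j then At j * (A i - At i) else 0 := by
  -- reduce to an addition form by adding t to both sides
  have hAtsq : ∀ i : Fin a, At i * (At i - 1) + At i = At i * At i := by
    intro i; cases h : At i with
    | zero => simp
    | succ p => simp [Nat.add_sub_cancel]; ring
  have step1 : (∑ i, (2 * Soff A i * At i + At i * (At i - 1))) + t =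
      ∑ i, (2 * Soff A i * At i + At i * At i) := by
    rw [← hs, ← Finset.sum_add_distrib]
    refine Finset.sum_congr rfl fun i _ => ?_
    rw [add_assoc, hAtsq]
  have step2 : t * (t - 1) + t = t * t := by cases t with
    | zero => simp
    | succ p => simp [Nat.add_sub_cancel]; ring
  -- Soff double sum
  have hS : ∑ i, 2 * Soff A i * At i = 2 * ∑ i, ∑ j, if i < j then A i * At j else 0 := by
    have : ∀ i : Fin a, 2 * Soff A i * At i = 2 * ∑ j, if j < i then A j * At i else 0 := by
      intro i
      rw [Soff, mul_assoc, Finset.sum_mul, Finset.mul_sum, Finset.mul_sum]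
      refine Finset.sum_congr rfl fun j _ => ?_
      rw [ite_mul, zero_mul]
    rw [Finset.sum_congr rfl fun i _ => this i, ← Finset.mul_sum]
    congr 1
    rw [Finset.sum_comm]
  -- t*t expansion
  have ht2 : t * t = (∑ i, At i * At i) + 2 * ∑ i, ∑ j, if i < j then At j * At i else 0 := by
    rw [← hs, Finset.sum_mul_sum]
    rw [tri_split (fun i j => At i * At j)]
    have : (∑ i, ∑ j, if i < j then At i * At j else 0)
        = ∑ i, ∑ j, if i < j then At j * At i else 0 := by
      refine Finset.sum_congr rfl fun i _ => Finset.sum_congr rfl fun j _ => ?_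
      rw [mul_comm]
    rw [this]
    ring
  -- pointwise split of A i into (A i - At i) + At i
  have hsplit : (∑ i, ∑ j, if i < j then A i * At j else 0)
      = (∑ i, ∑ j, if i < j then At j * (A i - At i) else 0)
        + ∑ i, ∑ j, if i < j then At j * At i else 0 := by
    rw [← Finset.sum_add_distrib]
    refine Finset.sum_congr rfl fun i _ => ?_
    rw [← Finset.sum_add_distrib]
    refine Finset.sum_congr rfl fun j _ => ?_
    by_cases h : i < j
    · simp only [h, if_pos]
      rw [← Nat.mul_add, Nat.sub_add_cancel (hle i), mul_comm]
    · simp [h]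
  have bsplit : ∑ i, (2 * Soff A i * At i + At i * At i)
      = (∑ i, 2 * Soff A i * At i) + ∑ i, At i * At i := Finset.sum_add_distrib
  omega

lemma prod_expand {a : ℕ} (A : Fin a → ℕ) :
    (∏ i, Pb (Soff A i) (A i)) =
      ∑ At ∈ Fintype.piFinset (fun i => Finset.range (A i + 1)),
        Polynomial.C (∏ i, cb (Soff A i) (A i) (At i)) * Polynomial.X ^ (∑ i, At i) := by
  rw [Finset.prod_congr rfl fun i (_ : i ∈ Finset.univ) => Pb_eq (Soff A i) (A i)]
  rw [Finset.prod_univ_sum]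
  refine Finset.sum_congr rfl fun At _ => ?_
  rw [Finset.prod_mul_distrib, ← map_prod, Finset.prod_pow_eq_pow_sum]

lemma key {a : ℕ} (A : Fin a → ℕ) (t : ℕ) (ht : t ≤ ∑ i, A i) :
    qbin (∑ i, A i) t =
      ∑ At ∈ (Fintype.piFinset fun i => Finset.range (A i + 1)).filter
          (fun At => ∑ i, At i = t),
        q ^ (2 * ∑ i, ∑ j, if i < j then At j * (A i - At i) else 0) *
          ∏ i, qbin (A i) (At i) := by
  classical
  set n := ∑ i, A i with hn
  have hE : (∑ k ∈ Finset.range (n + 1), Polynomial.C (cb 0 n k) * Polynomial.X ^ k)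
      = ∑ At ∈ Fintype.piFinset (fun i => Finset.range (A i + 1)),
          Polynomial.C (∏ i, cb (Soff A i) (A i) (At i)) * Polynomial.X ^ (∑ i, At i) := by
    rw [← Pb_eq, ← prod_expand, ← Pb_blocks A 0]
    simp [zero_add]
  have hC := congrArg (fun p => Polynomial.coeff p t) hE
  simp only [Polynomial.finset_sum_coeff, Polynomial.coeff_C_mul, Polynomial.coeff_X_pow,
    mul_ite, mul_one, mul_zero] at hC
  rw [Finset.sum_ite_eq (Finset.range (n + 1)) t (fun k => cb 0 n k)] at hC
  rw [if_pos (Finset.mem_range.2 (Nat.lt_succ_of_le ht))] at hC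
  have hR : (∑ At ∈ Fintype.piFinset (fun i => Finset.range (A i + 1)),
        if t = ∑ i, At i then ∏ i, cb (Soff A i) (A i) (At i) else 0)
      = ∑ At ∈ (Fintype.piFinset fun i => Finset.range (A i + 1)).filter
          (fun At => ∑ i, At i = t), ∏ i, cb (Soff A i) (A i) (At i) := by
    rw [Finset.sum_filter]
    refine Finset.sum_congr rfl fun At _ => ?_
    simp [eq_comm]
  rw [hR] at hC
  -- now rewrite both sides
  have hL : cb 0 n t = q ^ (t * (t - 1)) * qbin n t := by
    rw [cb]; ring_nf
  rw [hL] at hC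
  have hterm : ∀ At ∈ (Fintype.piFinset fun i => Finset.range (A i + 1)).filter
      (fun At => ∑ i, At i = t),
      (∏ i, cb (Soff A i) (A i) (At i)) =
        q ^ (t * (t - 1)) *
          (q ^ (2 * ∑ i, ∑ j, if i < j then At j * (A i - At i) else 0) *
            ∏ i, qbin (A i) (At i)) := by
    intro At hAt
    rw [Finset.mem_filter] at hAt
    have hle : ∀ i, At i ≤ A i := by
      intro i
      have := (Fintype.mem_piFinset.1 hAt.1) i
      exact Nat.lt_succ_iff.1 (Finset.mem_range.1 this)
    have hs : ∑ i, At i = t := hAt.2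
    calc (∏ i, cb (Soff A i) (A i) (At i))
        = (∏ i, q ^ (2 * Soff A i * At i + At i * (At i - 1))) * ∏ i, qbin (A i) (At i) := by
          rw [← Finset.prod_mul_distrib]; rfl
      _ = q ^ (∑ i, (2 * Soff A i * At i + At i * (At i - 1))) * ∏ i, qbin (A i) (At i) := by
          rw [Finset.prod_pow_eq_pow_sum]
      _ = q ^ (t * (t - 1) + 2 * ∑ i, ∑ j, if i < j then At j * (A i - At i) else 0)
            * ∏ i, qbin (A i) (At i) := by
          rw [exponent_arith A At t hle hs]
      _ = q ^ (t * (t - 1)) *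
          (q ^ (2 * ∑ i, ∑ j, if i < j then At j * (A i - At i) else 0) *
            ∏ i, qbin (A i) (At i)) := by
          rw [pow_add]; ring
  rw [Finset.sum_congr rfl hterm, ← Finset.mul_sum] at hC
  exact mul_left_cancel₀ (pow_ne_zero _ q_ne_zero) hC

lemma prod_qp_ne_zero {a : ℕ} (B : Fin a → ℕ) : (∏ i, qp (B i)) ≠ 0 :=
  Finset.prod_ne_zero_iff.2 fun i _ => qp_ne_zero (B i)

end QMSaux

/-- Splitting of a quantum multinomial coefficient according to a partial sum `t`:
`[|A| choose A] = Σ_{At ≤ A, |At| = t} q^{2 Σ_{i<j} At_j (A_i - At_i)}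
  [t choose At] [|A|-t choose A - At]`. -/
theorem quantum_multinomial_splitting {a : ℕ} (A : Fin a → ℕ) (t : ℕ)
    (ht : t ≤ ∑ i, A i) :
    qmul A =
      ∑ At ∈ (Fintype.piFinset fun i => Finset.range (A i + 1)).filter
          (fun At => ∑ i, At i = t),
        q ^ (2 * ∑ i, ∑ j, if i < j then At j * (A i - At i) else 0) *
          qmul At * qmul (fun i => A i - At i) := by
  classical
  set n := ∑ i, A i with hn
  have hfact : qmul A = qbin n t * (qp t * qp (n - t) / ∏ i, qp (A i)) := by
    rw [qmul, qbin, ← hn]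
    rw [div_mul_div_comm]
    rw [mul_comm (qp t) (qp (n - t))] -- maybe unneeded
    field_simp [qp_ne_zero, prod_qp_ne_zero]
  rw [hfact, key A t ht, Finset.sum_mul]
  refine Finset.sum_congr rfl fun At hAt => ?_
  rw [Finset.mem_filter] at hAt
  have hle : ∀ i, At i ≤ A i := fun i =>
    Nat.lt_succ_iff.1 (Finset.mem_range.1 ((Fintype.mem_piFinset.1 hAt.1) i))
  have hs : ∑ i, At i = t := hAt.2
  have hsub : ∑ i, (A i - At i) = n - t := by
    have h1 : (∑ i, (A i - At i)) + ∑ i, At i = ∑ i, A i := by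
      rw [← Finset.sum_add_distrib]
      exact Finset.sum_congr rfl fun i _ => Nat.sub_add_cancel (hle i)
    omega
  have hqb : (∏ i, qbin (A i) (At i))
      = (∏ i, qp (A i)) / ((∏ i, qp (At i)) * ∏ i, qp (A i - At i)) := by
    rw [← Finset.prod_mul_distrib, ← Finset.prod_div_distrib]
    rfl
  rw [qmul, qmul, hs, hsub, hqb]
  have h1 := prod_qp_ne_zero A
  have h2 := prod_qp_ne_zero At
  have h3 := prod_qp_ne_zero (fun i => A i - At i)
  field_simp
end

section
/- For nonnegative integers d₁,…,d_k and an indeterminate x, the following identity holds in ℚ(q,x): (x²;q²)_{d₁+⋯+d_k} / ((q²;q²)_{d₁}⋯(q²;q²)_{d_k}) equals the sum over all decompositions d_i = α_i + β_i (with α_i, β_i ≥ 0) of (-x²q^{-1})^{α₁+⋯+α_k} · q^{α₁²+⋯+α_k² + 2·Σ_{i=1}^{k-1} α_{i+1}(d₁+⋯+d_i)} / ((q²;q²)_{α₁}⋯(q²;q²)_{α_k}·(q²;q²)_{β₁}⋯(q²;q²)_{β_k}). -/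
open Finset

/-- The field `ℚ(q,x)`, realized as rational functions in `x` over `ℚ(q)`. -/
abbrev K : Type := RatFunc (RatFunc ℚ)

/-- The variable `q` in `ℚ(q,x)`. -/
noncomputable def qv : K := RatFunc.C RatFunc.X

/-- The variable `x` in `ℚ(q,x)`. -/
noncomputable def xv : K := RatFunc.X

/-- `(q²;q²)_k = ∏_{i=1}^{k} (1 - q^{2i})`. -/
noncomputable def qpK (k : ℕ) : K := ∏ i ∈ Finset.range k, (1 - qv ^ (2 * (i + 1)))

/-- `(x²;q²)_n = ∏_{i=0}^{n-1} (1 - x² q^{2i})`. -/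
noncomputable def xpoch (n : ℕ) : K := ∏ i ∈ Finset.range n, (1 - xv ^ 2 * qv ^ (2 * i))

lemma qv_ne_zero : qv ≠ 0 := by
  simp [qv, RatFunc.X_ne_zero]

lemma qv_pow_ne_one {m : ℕ} (hm : m ≠ 0) : qv ^ m ≠ 1 := by
  intro h
  rw [qv, ← map_pow, ← map_one RatFunc.C] at h
  have h1 := RingHom.injective (RatFunc.C (K := RatFunc ℚ)) h
  rw [← RatFunc.algebraMap_X, ← map_pow, ← map_one (algebraMap (Polynomial ℚ) (RatFunc ℚ))] at h1
  have h2 := RatFunc.algebraMap_injective ℚ h1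
  have := congrArg Polynomial.natDegree h2
  simp [Polynomial.natDegree_X_pow] at this
  exact hm this

lemma one_sub_qv_pow_ne_zero {m : ℕ} (hm : m ≠ 0) : (1 : K) - qv ^ m ≠ 0 := by
  intro h
  exact qv_pow_ne_one hm (sub_eq_zero.mp h).symm

lemma qpK_ne_zero (n : ℕ) : qpK n ≠ 0 := by
  refine Finset.prod_ne_zero_iff.mpr fun i _ => ?_
  exact one_sub_qv_pow_ne_zero (by omega)

lemma qpK_succ (n : ℕ) : qpK (n + 1) = qpK n * (1 - qv ^ (2 * (n + 1))) :=
  Finset.prod_range_succ _ _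

lemma key_s4 (u : K) (β m : ℕ) :
    (-u * qv⁻¹)^(β+1) * qv^((β+1)^2) / (qpK (β+1) * qpK (m+1)) * (1 - qv^(2*(β+m+2)))
  = (-(u*qv^2) * qv⁻¹)^(β+1) * qv^((β+1)^2) / (qpK (β+1) * qpK m)
    - u * ((-(u*qv^2) * qv⁻¹)^β * qv^(β^2) / (qpK β * qpK (m+1))) := by
  have hq := qv_ne_zero
  have e1 : (-(u*qv^2) * qv⁻¹ : K) = (-u * qv⁻¹) * qv^2 := by field_simp
  have e2 : qv^((β+1)^2) = qv^(β^2) * qv^(2*β+1) := by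
    rw [← pow_add]; congr 1; ring
  have e3 : (qv:K)^(2*(β+m+2)) = qv^(2*(β+1)) * qv^(2*(m+1)) := by
    rw [show 2*(β+m+2) = 2*(β+1)+2*(m+1) from by ring, pow_add]
  have g1 : (qv:K)^(2*(β+1)) = (qv^2)^β * qv^2 := by
    rw [← pow_mul, ← pow_add]; ring_nf
  have g2 : (qv:K)^(2*β+1) = (qv^2)^β * qv := by
    rw [← pow_mul]; exact pow_succ qv (2*β)
  have h1 : (1:K) - (qv^2)^β * qv^2 ≠ 0 := by
    rw [← g1]; exact one_sub_qv_pow_ne_zero (by omega)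
  have h2 : (1:K) - qv^(2*(m+1)) ≠ 0 := one_sub_qv_pow_ne_zero (by omega)
  have ha : qpK β ≠ 0 := qpK_ne_zero β
  have hb : qpK m ≠ 0 := qpK_ne_zero m
  rw [qpK_succ β, qpK_succ m, e1, mul_pow (-u*qv⁻¹) (qv^2) (β+1),
    mul_pow (-u*qv⁻¹) (qv^2) β, pow_succ (-u*qv⁻¹) β, pow_succ ((qv:K)^2) β,
    e2, e3, g1, g2]
  generalize ((qv:K)^2)^β = V at h1 ⊢
  generalize (qv:K)^(β^2) = z
  generalize (-u * qv⁻¹ : K)^β = P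
  generalize (qv:K)^(2*(m+1)) = s at h2 ⊢
  generalize qpK β = a at ha ⊢
  generalize qpK m = b at hb ⊢
  have hD1 : a*(1-V*qv^2)*b ≠ 0 := by
    exact mul_ne_zero (mul_ne_zero ha h1) hb
  have hD2 : a*(b*(1-s)) ≠ 0 := mul_ne_zero ha (mul_ne_zero hb h2)
  have hL : a*(1-V*qv^2)*(b*(1-s)) ≠ 0 :=
    mul_ne_zero (mul_ne_zero ha h1) (mul_ne_zero hb h2)
  rw [div_mul_eq_mul_div, ← mul_div_assoc, div_sub_div _ _ hD1 hD2,
    div_eq_div_iff hL (mul_ne_zero hD1 hD2)]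
  field_simp
  ring

lemma keytop (u : K) (n : ℕ) :
    (-u*qv⁻¹)^(n+1) * qv^((n+1)^2) / (qpK (n+1) * qpK 0) * (1 - qv^(2*(n+1)))
  = -(u * ((-(u*qv^2)*qv⁻¹)^n * qv^(n^2) / (qpK n * qpK 0))) := by
  have hq := qv_ne_zero
  have e1 : (-(u*qv^2) * qv⁻¹ : K) = (-u * qv⁻¹) * qv^2 := by field_simp
  have e2 : qv^((n+1)^2) = qv^(n^2) * qv^(2*n+1) := by
    rw [← pow_add]; congr 1; ring
  have g1 : (qv:K)^(2*(n+1)) = (qv^2)^n * qv^2 := by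
    rw [← pow_mul, ← pow_add]; ring_nf
  have g2 : (qv:K)^(2*n+1) = (qv^2)^n * qv := by
    rw [← pow_mul]; exact pow_succ qv (2*n)
  have h1 : (1:K) - (qv^2)^n * qv^2 ≠ 0 := by
    rw [← g1]; exact one_sub_qv_pow_ne_zero (by omega)
  have ha : qpK n ≠ 0 := qpK_ne_zero n
  rw [qpK_succ n, e1, mul_pow (-u*qv⁻¹) (qv^2) n, pow_succ (-u*qv⁻¹) n, e2, g1, g2]
  generalize ((qv:K)^2)^n = V at h1 ⊢
  generalize (qv:K)^(n^2) = z
  generalize (-u * qv⁻¹ : K)^n = P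
  generalize qpK n = a at ha ⊢
  rw [show qpK 0 = 1 from by simp [qpK], mul_one, mul_one]
  have hD : a * (1 - V*qv^2) ≠ 0 := mul_ne_zero ha h1
  rw [div_mul_eq_mul_div, div_eq_iff hD]
  field_simp

lemma key0 (u : K) (n : ℕ) :
    (-u*qv⁻¹)^0 * qv^((0:ℕ)^2) / (qpK 0 * qpK (n+1)) * (1 - qv^(2*(n+1)))
  = (-(u*qv^2)*qv⁻¹)^0 * qv^((0:ℕ)^2) / (qpK 0 * qpK n) := by
  have h1 : (1:K) - qv^(2*(n+1)) ≠ 0 := one_sub_qv_pow_ne_zero (by omega)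
  have ha : qpK n ≠ 0 := qpK_ne_zero n
  rw [qpK_succ n]
  simp only [pow_zero, one_mul]
  rw [show qpK 0 = 1 from by simp [qpK], one_mul, one_mul]
  field_simp

lemma single (n : ℕ) : ∀ u : K,
    (∏ i ∈ range n, (1 - u * qv ^ (2 * i))) / qpK n
      = ∑ α ∈ range (n + 1), (-u * qv⁻¹) ^ α * qv ^ (α ^ 2) / (qpK α * qpK (n - α)) := by
  induction n with
  | zero => intro u; simp [qpK]
  | succ n ih =>
    intro u
    have hQ : (1:K) - qv^(2*(n+1)) ≠ 0 := one_sub_qv_pow_ne_zero (by omega)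
    have hsplit : ∏ i ∈ range (n+1), (1 - u*qv^(2*i))
        = (1-u) * ∏ i ∈ range n, (1 - (u*qv^2)*qv^(2*i)) := by
      rw [Finset.prod_range_succ']
      rw [show (2*0 : ℕ) = 0 from rfl, pow_zero, mul_one, mul_comm]
      congr 1
      refine Finset.prod_congr rfl fun i _ => ?_
      rw [show 2*(i+1) = 2 + 2*i from by ring, pow_add]; ring
    rw [hsplit, qpK_succ n, ← div_div, mul_div_assoc]
    rw [ih (u*qv^2)]
    rw [div_eq_iff hQ, Finset.sum_mul]
    rw [Finset.sum_range_succ'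
      (fun α => (-u * qv⁻¹) ^ α * qv ^ (α ^ 2) / (qpK α * qpK (n + 1 - α)) * (1 - qv^(2*(n+1)))) (n+1)]
    rw [Finset.sum_range_succ
      (fun β => (-u * qv⁻¹) ^ (β+1) * qv ^ ((β+1) ^ 2) / (qpK (β+1) * qpK (n + 1 - (β+1))) * (1 - qv^(2*(n+1)))) n]
    have hmid : ∀ β ∈ Finset.range n,
        (-u * qv⁻¹) ^ (β+1) * qv ^ ((β+1) ^ 2) / (qpK (β+1) * qpK (n + 1 - (β+1))) * (1 - qv^(2*(n+1)))
        = (-(u*qv^2) * qv⁻¹) ^ (β+1) * qv ^ ((β+1) ^ 2) / (qpK (β+1) * qpK (n - (β+1)))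
          - u * ((-(u*qv^2) * qv⁻¹) ^ β * qv ^ (β ^ 2) / (qpK β * qpK (n - β))) := by
      intro β hβ
      rw [Finset.mem_range] at hβ
      obtain ⟨m, hm⟩ : ∃ m, n - (β+1) = m := ⟨n - (β+1), rfl⟩
      have h1 : n + 1 - (β + 1) = m + 1 := by omega
      have h2 : n - β = m + 1 := by omega
      have h3 : 2*(n+1) = 2*(β+m+2) := by omega
      rw [hm, h1, h2, h3]
      exact key_s4 u β m
    rw [Finset.sum_congr rfl hmid, Finset.sum_sub_distrib,
      show n + 1 - (n+1) = 0 from by omega]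
    rw [Nat.sub_zero, key0 u n, keytop u n]
    rw [sub_mul, one_mul]
    nth_rewrite 1 [Finset.sum_range_succ'
      (fun α => (-(u*qv^2) * qv⁻¹) ^ α * qv ^ (α ^ 2) / (qpK α * qpK (n - α))) n]
    rw [Finset.mul_sum, Finset.sum_range_succ
      (fun β => u * ((-(u*qv^2) * qv⁻¹) ^ β * qv ^ (β ^ 2) / (qpK β * qpK (n - β)))) n]
    simp only [Nat.sub_zero, Nat.sub_self]
    ring

lemma piFinset_cons_sum {k : ℕ} (t : Fin (k+1) → Finset ℕ) (H : (Fin (k+1) → ℕ) → K) :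
    ∑ α ∈ Fintype.piFinset t, H α
      = ∑ a ∈ t 0, ∑ β ∈ Fintype.piFinset (fun i : Fin k => t i.succ), H (Fin.cons a β) := by
  rw [← Finset.sum_product']
  refine Finset.sum_nbij' (fun α => (α 0, fun i => α i.succ)) (fun p => Fin.cons p.1 p.2)
    ?_ ?_ ?_ ?_ ?_
  · intro α hα
    rw [Fintype.mem_piFinset] at hα
    simp only [Finset.mem_product]
    exact ⟨hα 0, Fintype.mem_piFinset.mpr fun i => hα i.succ⟩
  · intro p hp
    simp only [Finset.mem_product] at hp
    rw [Fintype.mem_piFinset]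
    intro i
    refine Fin.cases ?_ ?_ i
    · simpa using hp.1
    · intro j; simpa using Fintype.mem_piFinset.mp hp.2 j
  · intro α hα
    exact Fin.cons_self_tail α
  · intro p hp
    simp [Fin.cons_zero, Fin.cons_succ]
  · intro α hα
    simp only []
    exact congrArg H (Fin.cons_self_tail α).symm

lemma gen : ∀ (k : ℕ) (u : K) (d : Fin k → ℕ),
    (∏ i ∈ range (∑ i, d i), (1 - u * qv ^ (2 * i))) / ∏ i, qpK (d i)
      = ∑ α ∈ Fintype.piFinset (fun i => Finset.range (d i + 1)),
          (-u * qv⁻¹) ^ (∑ i, α i) *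
            qv ^ (∑ i, (α i)^2 + 2 * ∑ i, ∑ j, if j < i then α i * d j else 0) /
            ((∏ i, qpK (α i)) * ∏ i, qpK (d i - α i)) := by
  intro k
  induction k with
  | zero =>
    intro u d
    simp [qpK]
  | succ k ih =>
    intro u d
    rw [Fin.sum_univ_succ, Finset.prod_range_add, Fin.prod_univ_succ]
    have hre : ∀ i : ℕ, (1 - u * qv ^ (2 * (d 0 + i))) = 1 - (u * qv^(2 * d 0)) * qv^(2*i) := by
      intro i
      rw [show 2*(d 0 + i) = 2*(d 0) + 2*i from by ring, pow_add]; ring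
    rw [Finset.prod_congr rfl (fun i _ => hre i)]
    rw [show (∏ i ∈ range (d 0), (1 - u * qv ^ (2*i))) * (∏ i ∈ range (∑ i : Fin k, d i.succ), (1 - (u * qv^(2 * d 0)) * qv^(2*i))) / (qpK (d 0) * ∏ i : Fin k, qpK (d i.succ))
        = ((∏ i ∈ range (d 0), (1 - u * qv ^ (2*i))) / qpK (d 0)) * ((∏ i ∈ range (∑ i : Fin k, d i.succ), (1 - (u * qv^(2 * d 0)) * qv^(2*i))) / ∏ i : Fin k, qpK (d i.succ)) from
      (div_mul_div_comm _ _ _ _).symm]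
    rw [single (d 0) u, ih (u * qv^(2 * d 0)) (fun i => d i.succ)]
    rw [Finset.sum_mul_sum]
    rw [piFinset_cons_sum (fun i => Finset.range (d i + 1))
      (fun α => (-u * qv⁻¹) ^ (∑ i, α i) *
            qv ^ (∑ i, (α i)^2 + 2 * ∑ i, ∑ j, if j < i then α i * d j else 0) /
            ((∏ i, qpK (α i)) * ∏ i, qpK (d i - α i)))]
    refine Finset.sum_congr rfl fun a ha => Finset.sum_congr rfl fun β hβ => ?_
    simp only [Fin.sum_univ_succ, Fin.prod_univ_succ, Fin.cons_zero, Fin.cons_succ,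
      Fin.not_lt_zero, if_false, Finset.sum_const_zero, zero_add, Fin.succ_pos, if_true,
      Fin.succ_lt_succ_iff]
    rw [Finset.sum_add_distrib, ← Finset.sum_mul]
    have hbase : (-(u * qv ^ (2 * d 0)) * qv⁻¹ : K) = (-u * qv⁻¹) * qv^(2 * d 0) := by ring
    rw [hbase, mul_pow (-u*qv⁻¹) (qv^(2*d 0)) (∑ i, β i),
      ← pow_mul qv (2*d 0) (∑ i, β i), pow_add (-u*qv⁻¹) a (∑ i, β i)]
    rw [show a^2 + (∑ i : Fin k, (β i)^2) +
          2*((∑ i : Fin k, β i) * d 0 + ∑ i : Fin k, ∑ j : Fin k, if j < i then β i * d j.succ else 0)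
        = a^2 + ((∑ i : Fin k, (β i)^2) +
            2*(∑ i : Fin k, ∑ j : Fin k, if j < i then β i * d j.succ else 0))
          + 2 * d 0 * (∑ i : Fin k, β i) from by ring]
    rw [pow_add qv (a^2 + _) (2 * d 0 * (∑ i : Fin k, β i)), pow_add qv (a^2) _]
    ring


/-- KRSS Lemma 4.5: splitting of a q-Pochhammer factor into quiver-form summations:
`(x²;q²)_{|d|} / ∏ (q²;q²)_{d_i}` equals the sum over decompositions `d_i = α_i + β_i` of
`(-x²q^{-1})^{|α|} q^{Σ α_i² + 2 Σ_{i=1}^{k-1} α_{i+1}(d₁+⋯+d_i)} / (∏ (q²;q²)_{α_i} (q²;q²)_{β_i})`. -/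
theorem pochhammer_splitting {k : ℕ} (d : Fin k → ℕ) :
    xpoch (∑ i, d i) / ∏ i, qpK (d i) =
      ∑ α ∈ Fintype.piFinset fun i => Finset.range (d i + 1),
        (-(xv ^ 2) * qv⁻¹) ^ (∑ i, α i) *
          qv ^ (∑ i, (α i) ^ 2 + 2 * ∑ i, ∑ j, if j < i then α i * d j else 0) /
          ((∏ i, qpK (α i)) * ∏ i, qpK (d i - α i)) := by
  have : xpoch (∑ i, d i) = ∏ i ∈ Finset.range (∑ i, d i), (1 - xv^2 * qv ^ (2 * i)) := rfl
  rw [this]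
  exact gen k (xv^2) d
end
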